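/- For the life distribution with survival function F̄(x) = 25/(5+x)^2 on [0,1], (75/(2·54^9))·(55-x)^8 on [1,28], and (25/(9·2^10))·exp((28-x)/3) on [28,∞), the second moment E[X^2] = 2∫_0^∞ x·F̄(x) dx exceeds 2μ^2 = 50, where μ = 5 is the mean; hence the NBUE moment bound E[X^2] ≤ Γ(3)·μ^2 fails for this NWBUE distribution. -/

import Mathlib

open MeasureTheory Set Filter

private lemma L1 : ∫ x in Ioc (0:ℝ) 1, 25 / (5+x)^2 = 5/6 := by
  rw [← intervalIntegral.integral_of_le (by norm_num : (0:ℝ) ≤ 1)]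
  have h : ∀ x ∈ uIcc (0:ℝ) 1, HasDerivAt (fun y => -25 * (5+y)⁻¹) (25/(5+x)^2) x := by
    intro x hx
    simp only [uIcc_of_le (by norm_num : (0:ℝ) ≤ 1), mem_Icc] at hx
    have h5 : (5:ℝ) + x ≠ 0 := by nlinarith [hx.1]
    have := (((hasDerivAt_id' x).const_add 5).inv h5).const_mul (-25 : ℝ)
    convert this using 1
    all_goals try with_reducible_and_instances rfl
    field_simp
  have hc : ContinuousOn (fun x : ℝ => 25/(5+x)^2) (uIcc (0:ℝ) 1) := by
    apply ContinuousOn.div continuousOn_const (by fun_prop)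
    intro y hy
    simp only [uIcc_of_le (by norm_num : (0:ℝ) ≤ 1), mem_Icc] at hy
    nlinarith [hy.1]
  rw [intervalIntegral.integral_eq_sub_of_hasDerivAt h hc.intervalIntegrable]
  norm_num

private lemma L1x : ∫ x in Ioc (0:ℝ) 1, x * (25 / (5+x)^2)
    = 25 * Real.log 6 - 25 * Real.log 5 - 25/6 := by
  rw [← intervalIntegral.integral_of_le (by norm_num : (0:ℝ) ≤ 1)]
  have h : ∀ x ∈ uIcc (0:ℝ) 1,
      HasDerivAt (fun y => 25 * Real.log (5+y) + 125 * (5+y)⁻¹) (x * (25/(5+x)^2)) x := by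
    intro x hx
    simp only [uIcc_of_le (by norm_num : (0:ℝ) ≤ 1), mem_Icc] at hx
    have h5 : (5:ℝ) + x ≠ 0 := by nlinarith [hx.1]
    have h1 := (((hasDerivAt_id' x).const_add 5).log h5).const_mul (25 : ℝ)
    have h2 := (((hasDerivAt_id' x).const_add 5).inv h5).const_mul (125 : ℝ)
    convert h1.add h2 using 1
    all_goals try with_reducible_and_instances rfl
    field_simp
    ring
  have hc : ContinuousOn (fun x : ℝ => x * (25/(5+x)^2)) (uIcc (0:ℝ) 1) := by
    apply ContinuousOn.mul continuousOn_id
    apply ContinuousOn.div continuousOn_const (by fun_prop)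
    intro y hy
    simp only [uIcc_of_le (by norm_num : (0:ℝ) ≤ 1), mem_Icc] at hy
    nlinarith [hy.1]
  rw [intervalIntegral.integral_eq_sub_of_hasDerivAt h hc.intervalIntegrable]
  norm_num
  ring

private lemma L2 : ∫ x in Ioc (1:ℝ) 28, 75/(2*54^9) * (55-x)^8 = 12775/3072 := by
  rw [← intervalIntegral.integral_of_le (by norm_num : (1:ℝ) ≤ 28)]
  have h : ∀ x ∈ uIcc (1:ℝ) 28,
      HasDerivAt (fun y => -(75/(2*54^9)/9) * (55-y)^9) (75/(2*54^9) * (55-x)^8) x := by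
    intro x _
    have h1 := (((hasDerivAt_id' x).const_sub 55).pow 9).const_mul (-(75/(2*54^9)/9) : ℝ)
    convert h1 using 1
    all_goals try with_reducible_and_instances rfl
    simp
    ring
  rw [intervalIntegral.integral_eq_sub_of_hasDerivAt h
    (by apply Continuous.intervalIntegrable; fun_prop)]
  norm_num

private lemma L2x : ∫ x in Ioc (1:ℝ) 28, x * (75/(2*54^9) * (55-x)^8) = 162305/6144 := by
  rw [← intervalIntegral.integral_of_le (by norm_num : (1:ℝ) ≤ 28)]
  have h : ∀ x ∈ uIcc (1:ℝ) 28,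
      HasDerivAt (fun y => 75/(2*54^9) * (-(55:ℝ)/9 * (55-y)^9 + (55-y)^10/10))
        (x * (75/(2*54^9) * (55-x)^8)) x := by
    intro x _
    have h1 := ((((hasDerivAt_id' x).const_sub 55).pow 9).const_mul (-(55:ℝ)/9)).add
      ((((hasDerivAt_id' x).const_sub 55).pow 10).div_const 10)
    have h2 := h1.const_mul (75/(2*54^9) : ℝ)
    convert h2 using 1
    all_goals try with_reducible_and_instances rfl
    simp
    ring
  rw [intervalIntegral.integral_eq_sub_of_hasDerivAt h
    (by apply Continuous.intervalIntegrable; fun_prop)]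
  norm_num

private lemma hd3 : ∀ x ∈ Ici (28:ℝ),
    HasDerivAt (fun y => -3 * (25/(9*2^10)) * Real.exp ((28-y)/3))
      (25/(9*2^10) * Real.exp ((28-x)/3)) x := by
  intro x _
  have h := ((((hasDerivAt_id' x).const_sub 28).div_const 3).exp).const_mul
    (-3 * (25/(9*2^10)) : ℝ)
  convert h using 1
  all_goals try with_reducible_and_instances rfl
  ring

private lemma ht3 : Tendsto (fun x : ℝ => -3 * (25/(9*2^10)) * Real.exp ((28-x)/3))
    atTop (nhds 0) := by
  have h1 : Tendsto (fun x : ℝ => (28-x)/3) atTop atBot := by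
    apply Tendsto.atBot_div_const (by norm_num)
    apply tendsto_atBot_add_const_left
    exact tendsto_neg_atBot_iff.mpr tendsto_id
  have := (Real.tendsto_exp_atBot.comp h1).const_mul (-3 * (25/(9*2^10)) : ℝ)
  simpa using this

private lemma L3 : ∫ x in Ioi (28:ℝ), 25/(9*2^10) * Real.exp ((28-x)/3) = 25/3072 := by
  rw [integral_Ioi_of_hasDerivAt_of_nonneg' hd3 (fun x _ => by positivity) ht3]
  norm_num

private lemma I3 : IntegrableOn (fun x => 25/(9*2^10) * Real.exp ((28-x)/3)) (Ioi (28:ℝ)) :=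
  integrableOn_Ioi_deriv_of_nonneg' hd3 (fun x _ => by positivity) ht3

private lemma hd3x : ∀ x ∈ Ici (28:ℝ),
    HasDerivAt (fun y => -(3*y+9) * (25/(9*2^10)) * Real.exp ((28-y)/3))
      (x * (25/(9*2^10) * Real.exp ((28-x)/3))) x := by
  intro x _
  have hu : HasDerivAt (fun y : ℝ => -(3*y+9) * (25/(9*2^10))) (-3 * (25/(9*2^10))) x := by
    have := ((((hasDerivAt_id' x).const_mul 3).add_const 9).neg).mul_const (25/(9*2^10) : ℝ)
    convert this using 1
    all_goals try with_reducible_and_instances rfl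
    ring
  have hv : HasDerivAt (fun y : ℝ => Real.exp ((28-y)/3)) (Real.exp ((28-x)/3) * (-1/3)) x := by
    have := (((hasDerivAt_id' x).const_sub 28).div_const 3).exp
    convert this using 1
  convert hu.mul hv using 1
  all_goals try with_reducible_and_instances rfl
  ring

private lemma ht3x : Tendsto (fun x : ℝ => -(3*x+9) * (25/(9*2^10)) * Real.exp ((28-x)/3))
    atTop (nhds 0) := by
  have ht : Tendsto (fun x : ℝ => x/3) atTop atTop :=
    tendsto_id.atTop_div_const (by norm_num)
  have h1 := (Real.tendsto_pow_mul_exp_neg_atTop_nhds_zero 1).comp ht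
  have h2 := Real.tendsto_exp_neg_atTop_nhds_zero.comp ht
  have h3 := ((h1.const_mul (9:ℝ)).add (h2.const_mul (9:ℝ))).const_mul
    (-(25/(9*2^10)) * Real.exp (28/3) : ℝ)
  have h4 : Tendsto (fun x : ℝ =>
      (-(25/(9*2^10)) * Real.exp (28/3)) *
        (9 * ((x/3)^1 * Real.exp (-(x/3))) + 9 * Real.exp (-(x/3))))
      atTop (nhds 0) := by simpa using h3
  apply h4.congr
  intro x
  rw [show (28-x)/3 = 28/3 + (-(x/3)) by ring, Real.exp_add]
  ring

private lemma L3x : ∫ x in Ioi (28:ℝ), x * (25/(9*2^10) * Real.exp ((28-x)/3)) = 775/3072 := by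
  rw [integral_Ioi_of_hasDerivAt_of_nonneg' hd3x
    (fun x hx => by have : (0:ℝ) < x := lt_trans (by norm_num) hx; positivity) ht3x]
  norm_num

private lemma I3x : IntegrableOn (fun x => x * (25/(9*2^10) * Real.exp ((28-x)/3)))
    (Ioi (28:ℝ)) :=
  integrableOn_Ioi_deriv_of_nonneg' hd3x
    (fun x hx => by have : (0:ℝ) < x := lt_trans (by norm_num) hx; positivity) ht3x

private lemma I1 : IntegrableOn (fun x : ℝ => 25 / (5+x)^2) (Ioc (0:ℝ) 1) := by
  have hc : ContinuousOn (fun x : ℝ => 25/(5+x)^2) (Icc (0:ℝ) 1) := by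
    apply ContinuousOn.div continuousOn_const (by fun_prop)
    intro y hy
    simp only [mem_Icc] at hy
    nlinarith [hy.1]
  exact hc.integrableOn_Icc.mono_set Ioc_subset_Icc_self

private lemma I1x : IntegrableOn (fun x : ℝ => x * (25 / (5+x)^2)) (Ioc (0:ℝ) 1) := by
  have hc : ContinuousOn (fun x : ℝ => x * (25/(5+x)^2)) (Icc (0:ℝ) 1) := by
    apply ContinuousOn.mul continuousOn_id
    apply ContinuousOn.div continuousOn_const (by fun_prop)
    intro y hy
    simp only [mem_Icc] at hy
    nlinarith [hy.1]
  exact hc.integrableOn_Icc.mono_set Ioc_subset_Icc_self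

private lemma I2 : IntegrableOn (fun x : ℝ => 75/(2*54^9) * (55-x)^8) (Ioc (1:ℝ) 28) :=
  Continuous.integrableOn_Ioc (by fun_prop)

private lemma I2x : IntegrableOn (fun x : ℝ => x * (75/(2*54^9) * (55-x)^8)) (Ioc (1:ℝ) 28) :=
  Continuous.integrableOn_Ioc (by fun_prop)

/-- For the NWBUE distribution of Example 3.1 with mean `μ = 5`, the second moment
`E[X²] = 2∫_0^∞ x F̄(x) dx` exceeds `2μ² = 50`, so the NBUE moment bound
`E[X²] ≤ Γ(3) μ²` fails. -/
theorem example31_moment_bound_fails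
    (Fbar : ℝ → ℝ)
    (hF : ∀ x, Fbar x =
      if x ≤ 1 then 25 / (5 + x) ^ 2
      else if x ≤ 28 then 75 / (2 * 54 ^ 9) * (55 - x) ^ 8
      else 25 / (9 * 2 ^ 10) * Real.exp ((28 - x) / 3)) :
    (∫ x in Ioi (0:ℝ), Fbar x = 5) ∧
      (2 * 5 ^ 2 < 2 * ∫ x in Ioi (0:ℝ), x * Fbar x) ∧
      ¬ (2 * ∫ x in Ioi (0:ℝ), x * Fbar x ≤ Real.Gamma 3 * 5 ^ 2) := by
  have e1 : EqOn Fbar (fun x : ℝ => 25 / (5+x)^2) (Ioc 0 1) := by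
    intro x hx
    rw [hF x, if_pos hx.2]
  have e2 : EqOn Fbar (fun x : ℝ => 75/(2*54^9) * (55-x)^8) (Ioc 1 28) := by
    intro x hx
    rw [hF x, if_neg (not_le.mpr hx.1), if_pos hx.2]
  have e3 : EqOn Fbar (fun x : ℝ => 25/(9*2^10) * Real.exp ((28-x)/3)) (Ioi 28) := by
    intro x hx
    rw [hF x, if_neg (not_le.mpr (lt_trans (by norm_num) hx)), if_neg (not_le.mpr hx)]
  have e1x : EqOn (fun x => x * Fbar x) (fun x : ℝ => x * (25 / (5+x)^2)) (Ioc 0 1) :=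
    fun x hx => by simp only [e1 hx]
  have e2x : EqOn (fun x => x * Fbar x) (fun x : ℝ => x * (75/(2*54^9) * (55-x)^8)) (Ioc 1 28) :=
    fun x hx => by simp only [e2 hx]
  have e3x : EqOn (fun x => x * Fbar x)
      (fun x : ℝ => x * (25/(9*2^10) * Real.exp ((28-x)/3))) (Ioi 28) :=
    fun x hx => by simp only [e3 hx]
  have hi1 : IntegrableOn Fbar (Ioc 0 1) := I1.congr_fun e1.symm measurableSet_Ioc
  have hi2 : IntegrableOn Fbar (Ioc 1 28) := I2.congr_fun e2.symm measurableSet_Ioc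
  have hi3 : IntegrableOn Fbar (Ioi 28) := I3.congr_fun e3.symm measurableSet_Ioi
  have hi1x : IntegrableOn (fun x => x * Fbar x) (Ioc 0 1) :=
    I1x.congr_fun e1x.symm measurableSet_Ioc
  have hi2x : IntegrableOn (fun x => x * Fbar x) (Ioc 1 28) :=
    I2x.congr_fun e2x.symm measurableSet_Ioc
  have hi3x : IntegrableOn (fun x => x * Fbar x) (Ioi 28) :=
    I3x.congr_fun e3x.symm measurableSet_Ioi
  have hu1 : Ioi (1:ℝ) = Ioc 1 28 ∪ Ioi 28 := (Ioc_union_Ioi_eq_Ioi (by norm_num)).symm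
  have hu0 : Ioi (0:ℝ) = Ioc 0 1 ∪ Ioi 1 := (Ioc_union_Ioi_eq_Ioi (by norm_num)).symm
  have hIoi1 : IntegrableOn Fbar (Ioi 1) := by rw [hu1]; exact hi2.union hi3
  have hIoi1x : IntegrableOn (fun x => x * Fbar x) (Ioi 1) := by
    rw [hu1]; exact hi2x.union hi3x
  have hmean : ∫ x in Ioi (0:ℝ), Fbar x = 5 := by
    rw [hu0, setIntegral_union (Ioc_disjoint_Ioi le_rfl) measurableSet_Ioi hi1 hIoi1,
      hu1, setIntegral_union (Ioc_disjoint_Ioi le_rfl) measurableSet_Ioi hi2 hi3,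
      setIntegral_congr_fun measurableSet_Ioc e1,
      setIntegral_congr_fun measurableSet_Ioc e2,
      setIntegral_congr_fun measurableSet_Ioi e3, L1, L2, L3]
    norm_num
  have hsecond : ∫ x in Ioi (0:ℝ), x * Fbar x
      = 25 * Real.log 6 - 25 * Real.log 5 + 46085/2048 := by
    rw [hu0, setIntegral_union (Ioc_disjoint_Ioi le_rfl) measurableSet_Ioi hi1x hIoi1x,
      hu1, setIntegral_union (Ioc_disjoint_Ioi le_rfl) measurableSet_Ioi hi2x hi3x,
      setIntegral_congr_fun measurableSet_Ioc e1x,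
      setIntegral_congr_fun measurableSet_Ioc e2x,
      setIntegral_congr_fun measurableSet_Ioi e3x, L1x, L2x, L3x]
    norm_num
    linarith
  have hlog : (1:ℝ)/6 ≤ Real.log 6 - Real.log 5 := by
    have h := Real.log_le_sub_one_of_pos (show (0:ℝ) < 5/6 by norm_num)
    rw [Real.log_div (by norm_num) (by norm_num)] at h
    linarith
  have hgt : 2 * 5 ^ 2 < 2 * ∫ x in Ioi (0:ℝ), x * Fbar x := by
    rw [hsecond]; nlinarith
  refine ⟨hmean, hgt, ?_⟩
  have hg : Real.Gamma 3 = 2 := by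
    rw [show (3:ℝ) = 2 + 1 by norm_num, Real.Gamma_add_one (by norm_num), Real.Gamma_two]
    norm_num
  rw [hg]
  push_neg
  exact_mod_cast hgt
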